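/- Two configurations (X,V), (X',V') ∈ (ℝ^{3×n})² are equivalent under simultaneous permutation of columns, a common orthogonal transformation R ∈ O(3) applied to all columns of both X and V, and a translation t applied only to the columns of X, if and only if there is a permutation τ such that for all i,j: ‖(x_i − x̄) − (x_j − x̄)‖ = ‖(x'_{τ(i)} − x̄') − (x'_{τ(j)} − x̄')‖, ‖(x_i − x̄) − v_j‖ = ‖(x'_{τ(i)} − x̄') − v'_{τ(j)}‖, ‖v_i − v_j‖ = ‖v'_{τ(i)} − v'_{τ(j)}‖, and ‖v_i‖ = ‖v'_{τ(i)}‖ for all i, where x̄ and x̄' denote the barycenters of X and X' respectively. -/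

import Mathlib

open scoped RealInnerProductSpace

noncomputable def myCombo {ι : Type*} [Fintype ι] (a : ι → EuclideanSpace ℝ (Fin 3)) :
    (ι → ℝ) →ₗ[ℝ] EuclideanSpace ℝ (Fin 3) where
  toFun c := ∑ p, c p • a p
  map_add' c d := by simp [add_smul, Finset.sum_add_distrib]
  map_smul' r c := by simp [Finset.smul_sum, smul_smul]

lemma exists_isometry_of_gram {ι : Type*} [Fintype ι]
    (a b : ι → EuclideanSpace ℝ (Fin 3))
    (h : ∀ p q, ⟪a p, a q⟫ = ⟪b p, b q⟫) :
    ∃ R : EuclideanSpace ℝ (Fin 3) ≃ₗᵢ[ℝ] EuclideanSpace ℝ (Fin 3), ∀ p, R (a p) = b p := by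
  classical
  set A := myCombo a with hA
  set B := myCombo b with hB
  have key : ∀ c, ‖A c‖ = ‖B c‖ := by
    intro c
    have ha : ∀ (v : ι → EuclideanSpace ℝ (Fin 3)) c,
        ⟪myCombo v c, myCombo v c⟫ = ∑ p, ∑ q, c p * c q * ⟪v p, v q⟫ := by
      intro v c
      simp only [myCombo, LinearMap.coe_mk, AddHom.coe_mk, sum_inner, inner_sum,
        real_inner_smul_left, real_inner_smul_right]
      rw [Finset.sum_comm]
      refine Finset.sum_congr rfl fun p _ => Finset.sum_congr rfl fun q _ => ?_
      ring
    have : ⟪A c, A c⟫ = ⟪B c, B c⟫ := by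
      rw [hA, hB, ha, ha]
      simp only [h]
    rw [@norm_eq_sqrt_real_inner, @norm_eq_sqrt_real_inner, this]
  have hker : LinearMap.ker A ≤ LinearMap.ker B := by
    intro c hc
    rw [LinearMap.mem_ker] at hc ⊢
    have := key c
    rw [hc, norm_zero] at this
    exact norm_eq_zero.mp this.symm
  let L : LinearMap.range A →ₗ[ℝ] EuclideanSpace ℝ (Fin 3) :=
    ((LinearMap.ker A).liftQ B hker).comp A.quotKerEquivRange.symm.toLinearMap
  have hL : ∀ c, L ⟨A c, LinearMap.mem_range_self A c⟩ = B c := by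
    intro c
    simp only [L, LinearMap.coe_comp, Function.comp_apply, LinearEquiv.coe_coe,
      A.quotKerEquivRange_symm_apply_image c (LinearMap.mem_range_self A c)]
    simp [Submodule.mkQ_apply, Submodule.liftQ_apply]
  have hLn : ∀ s : LinearMap.range A, ‖L s‖ = ‖s‖ := by
    rintro ⟨-, c, rfl⟩
    rw [hL c]
    exact (key c).symm
  let Li : LinearMap.range A →ₗᵢ[ℝ] EuclideanSpace ℝ (Fin 3) := ⟨L, hLn⟩
  refine ⟨Li.extend.toLinearIsometryEquiv rfl, fun p => ?_⟩
  have h1 : a p = A (Pi.single p 1) := by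
    simp [hA, myCombo, Pi.single_apply, ite_smul]
  have h2 : b p = B (Pi.single p 1) := by
    simp [hB, myCombo, Pi.single_apply, ite_smul]
  rw [LinearIsometry.coe_toLinearIsometryEquiv, h1, h2]
  calc Li.extend (A (Pi.single p 1))
      = Li.extend ((⟨A (Pi.single p 1), LinearMap.mem_range_self A _⟩ :
          LinearMap.range A) : EuclideanSpace ℝ (Fin 3)) := rfl
    _ = Li ⟨A (Pi.single p 1), LinearMap.mem_range_self A _⟩ := Li.extend_apply _
    _ = B (Pi.single p 1) := hL _

lemma inner_eq_of_norms {x y x' y' : EuclideanSpace ℝ (Fin 3)}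
    (hx : ‖x‖ = ‖x'‖) (hy : ‖y‖ = ‖y'‖) (hxy : ‖x - y‖ = ‖x' - y'‖) :
    ⟪x, y⟫ = ⟪x', y'⟫ := by
  have h1 := norm_sub_sq_real x y
  have h2 := norm_sub_sq_real x' y'
  rw [hx, hy, hxy] at h1
  linarith

lemma row_sum_eq {n : ℕ} (c : Fin n → EuclideanSpace ℝ (Fin 3))
    (h0 : ∑ k, c k = 0) (i : Fin n) :
    ∑ j, ‖c i - c j‖ ^ 2 = n * ‖c i‖ ^ 2 + ∑ j, ‖c j‖ ^ 2 := by
  have : ∀ j, ‖c i - c j‖ ^ 2 = ‖c i‖ ^ 2 - 2 * ⟪c i, c j⟫ + ‖c j‖ ^ 2 :=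
    fun j => norm_sub_sq_real _ _
  rw [Finset.sum_congr rfl fun j _ => this j]
  rw [Finset.sum_add_distrib, Finset.sum_sub_distrib, ← Finset.mul_sum, ← inner_sum, h0]
  simp [mul_comm]

lemma norm_sq_of_centered {n : ℕ} (hn : 0 < n) (c : Fin n → EuclideanSpace ℝ (Fin 3))
    (h0 : ∑ k, c k = 0) (i : Fin n) :
    (n : ℝ) * ‖c i‖ ^ 2 =
      ∑ j, ‖c i - c j‖ ^ 2 - (2 * (n : ℝ))⁻¹ * ∑ k, ∑ j, ‖c k - c j‖ ^ 2 := by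
  have hrow := row_sum_eq c h0
  have htot : ∑ k, ∑ j, ‖c k - c j‖ ^ 2 = 2 * n * ∑ j, ‖c j‖ ^ 2 := by
    rw [Finset.sum_congr rfl fun k _ => hrow k, Finset.sum_add_distrib, ← Finset.mul_sum]
    simp
    ring
  rw [hrow i, htot]
  have hne : (n : ℝ) ≠ 0 := Nat.cast_ne_zero.mpr hn.ne'
  field_simp
  ring

/-- Two position-velocity configurations are related by a simultaneous permutation, a common
orthogonal transformation (applied to positions and velocities) and a translation (applied to
positions only) if and only if some permutation matches all centralized pairwise distances,
position-velocity cross distances, velocity pairwise distances and velocity norms. -/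
theorem posVel_equiv_iff_dists (n : ℕ) (hn : 0 < n)
    (X V X' V' : Fin n → EuclideanSpace ℝ (Fin 3)) :
    (∃ (τ : Equiv.Perm (Fin n))
       (R : EuclideanSpace ℝ (Fin 3) ≃ₗᵢ[ℝ] EuclideanSpace ℝ (Fin 3))
       (t : EuclideanSpace ℝ (Fin 3)),
       ∀ i, X' i = R (X (τ i)) + t ∧ V' i = R (V (τ i))) ↔
    (∃ τ : Equiv.Perm (Fin n), ∀ i j,
      ‖(X i - (n : ℝ)⁻¹ • ∑ k, X k) - (X j - (n : ℝ)⁻¹ • ∑ k, X k)‖ =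
        ‖(X' (τ i) - (n : ℝ)⁻¹ • ∑ k, X' k) - (X' (τ j) - (n : ℝ)⁻¹ • ∑ k, X' k)‖ ∧
      ‖(X i - (n : ℝ)⁻¹ • ∑ k, X k) - V j‖ =
        ‖(X' (τ i) - (n : ℝ)⁻¹ • ∑ k, X' k) - V' (τ j)‖ ∧
      ‖V i - V j‖ = ‖V' (τ i) - V' (τ j)‖ ∧
      ‖V i‖ = ‖V' (τ i)‖) := by
  classical
  have hne : (n : ℝ) ≠ 0 := Nat.cast_ne_zero.mpr hn.ne'
  set m : EuclideanSpace ℝ (Fin 3) := (n : ℝ)⁻¹ • ∑ k, X k with hm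
  set m' : EuclideanSpace ℝ (Fin 3) := (n : ℝ)⁻¹ • ∑ k, X' k with hm'
  constructor
  · rintro ⟨σ, R, t, hσ⟩
    refine ⟨σ.symm, fun i j => ?_⟩
    have hX : ∀ i, X' (σ.symm i) = R (X i) + t := fun i => by
      simpa using (hσ (σ.symm i)).1
    have hV : ∀ i, V' (σ.symm i) = R (V i) := fun i => by
      simpa using (hσ (σ.symm i)).2
    have hmm : m' = R m + t := by
      have h1 : ∑ k, X' k = R (∑ k, X k) + (n : ℝ) • t := by
        rw [← Equiv.sum_comp σ.symm fun k => X' k]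
        simp only [hX]
        rw [Finset.sum_add_distrib, map_sum, Finset.sum_const, Finset.card_univ,
          Fintype.card_fin, Nat.cast_smul_eq_nsmul ℝ]
      rw [hm', hm, h1, smul_add, smul_smul, inv_mul_cancel₀ hne, one_smul, map_smul]
    have hc : ∀ i, X' (σ.symm i) - m' = R (X i - m) := fun i => by
      rw [hX, hmm, map_sub]; abel
    refine ⟨?_, ?_, ?_, ?_⟩
    · rw [hc i, hc j, ← map_sub, R.norm_map]
    · rw [hc i, hV j, ← map_sub, R.norm_map]
    · rw [hV i, hV j, ← map_sub, R.norm_map]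
    · rw [hV i, R.norm_map]
  · rintro ⟨τ, h⟩
    have h0 : ∑ k, (X k - m) = 0 := by
      rw [Finset.sum_sub_distrib, Finset.sum_const, Finset.card_univ, Fintype.card_fin,
        hm, ← Nat.cast_smul_eq_nsmul ℝ, smul_smul, mul_inv_cancel₀ hne, one_smul, sub_self]
    have h0' : ∑ k, (X' k - m') = 0 := by
      rw [Finset.sum_sub_distrib, Finset.sum_const, Finset.card_univ, Fintype.card_fin,
        hm', ← Nat.cast_smul_eq_nsmul ℝ, smul_smul, mul_inv_cancel₀ hne, one_smul, sub_self]
    have hnc : ∀ i, ‖X i - m‖ = ‖X' (τ i) - m'‖ := by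
      intro i
      have e1 := norm_sq_of_centered hn (fun k => X k - m) h0 i
      have e2 := norm_sq_of_centered hn (fun k => X' k - m') h0' (τ i)
      have r1 : ∑ j, ‖X' (τ i) - m' - (X' j - m')‖ ^ 2
          = ∑ j, ‖X' (τ i) - m' - (X' (τ j) - m')‖ ^ 2 :=
        (Equiv.sum_comp τ fun j => ‖X' (τ i) - m' - (X' j - m')‖ ^ 2).symm
      have r2 : ∑ k, ∑ j, ‖X' k - m' - (X' j - m')‖ ^ 2
          = ∑ k, ∑ j, ‖X' (τ k) - m' - (X' (τ j) - m')‖ ^ 2 := by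
        rw [← Equiv.sum_comp τ (fun k => ∑ j, ‖X' k - m' - (X' j - m')‖ ^ 2)]
        refine Finset.sum_congr rfl fun k _ => ?_
        exact (Equiv.sum_comp τ fun j => ‖X' (τ k) - m' - (X' j - m')‖ ^ 2).symm
      rw [r1, r2] at e2
      have e3 : (n : ℝ) * ‖X i - m‖ ^ 2 = (n : ℝ) * ‖X' (τ i) - m'‖ ^ 2 := by
        rw [e1, e2]
        congr 1
        · exact Finset.sum_congr rfl fun j _ => by rw [(h i j).1]
        · congr 1
          exact Finset.sum_congr rfl fun k _ => Finset.sum_congr rfl fun j _ => by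
            rw [(h k j).1]
      exact (sq_eq_sq₀ (norm_nonneg _) (norm_nonneg _)).mp (mul_left_cancel₀ hne e3)
    set a : Fin n ⊕ Fin n → EuclideanSpace ℝ (Fin 3) :=
      Sum.elim (fun i => X i - m) V with hadef
    set b : Fin n ⊕ Fin n → EuclideanSpace ℝ (Fin 3) :=
      Sum.elim (fun i => X' (τ i) - m') (fun i => V' (τ i)) with hbdef
    have hnorms : ∀ p, ‖a p‖ = ‖b p‖ := by
      rintro (i | i)
      · exact hnc i
      · exact (h i i).2.2.2
    have hdists : ∀ p q, ‖a p - a q‖ = ‖b p - b q‖ := by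
      rintro (i | i) (j | j) <;>
        simp only [hadef, hbdef, Sum.elim_inl, Sum.elim_inr]
      · exact (h i j).1
      · exact (h i j).2.1
      · rw [norm_sub_rev, norm_sub_rev (V' (τ i))]
        exact (h j i).2.1
      · exact (h i j).2.2.1
    obtain ⟨R, hR⟩ := exists_isometry_of_gram a b fun p q =>
      inner_eq_of_norms (hnorms p) (hnorms q) (hdists p q)
    have hRc : ∀ i, R (X i - m) = X' (τ i) - m' := fun i => hR (Sum.inl i)
    have hRV : ∀ i, R (V i) = V' (τ i) := fun i => hR (Sum.inr i)
    refine ⟨τ.symm, R, m' - R m, fun i => ⟨?_, ?_⟩⟩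
    · have h3 := hRc (τ.symm i)
      rw [Equiv.apply_symm_apply, map_sub] at h3
      calc X' i = X' i - m' + m' := by abel
        _ = R (X (τ.symm i)) - R m + m' := by rw [← h3]
        _ = R (X (τ.symm i)) + (m' - R m) := by abel
    · have h4 := hRV (τ.symm i)
      rw [Equiv.apply_symm_apply] at h4
      exact h4.symm
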